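/- arXiv:2107.07179 — 3 statements merged into one kernel-verified Lean document; each statement's English description precedes it below -/
import Mathlib

section
/- Let v_max > 0, a_max > 0, L > 0 with L ≥ v_max² / (2·a_max), and let T ≥ 0. Let v : ℝ → ℝ be continuous on [0, T], differentiable on the open interval (0, T), with v 0 = 0, 0 ≤ v t ≤ v_max for all t ∈ [0, T], and deriv v t ≤ a_max for all t ∈ (0, T). If ∫ t in (0)..(T), v t = L, then T ≥ L / v_max + v_max / (2·a_max). -/
theorem traversal_time_lower_bound (v_max a_max L T : ℝ)
    (hv : 0 < v_max) (ha : 0 < a_max) (hL : 0 < L)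
    (hLge : L ≥ v_max ^ 2 / (2 * a_max)) (hT : 0 ≤ T)
    (v : ℝ → ℝ)
    (hcont : ContinuousOn v (Set.Icc 0 T))
    (hdiff : DifferentiableOn ℝ v (Set.Ioo 0 T))
    (hv0 : v 0 = 0)
    (hbound : ∀ t ∈ Set.Icc (0 : ℝ) T, 0 ≤ v t ∧ v t ≤ v_max)
    (hderiv : ∀ t ∈ Set.Ioo (0 : ℝ) T, deriv v t ≤ a_max)
    (hint : ∫ t in (0 : ℝ)..T, v t = L) :
    T ≥ L / v_max + v_max / (2 * a_max) := by
  -- pointwise bound v t ≤ a_max * t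
  have hmono : MonotoneOn (fun t => a_max * t - v t) (Set.Icc 0 T) := by
    apply monotoneOn_of_deriv_nonneg (convex_Icc 0 T)
    · exact (continuousOn_const.mul continuousOn_id).sub hcont
    · rw [interior_Icc]
      exact (differentiableOn_const _ |>.mul differentiableOn_id).sub hdiff
    · intro x hx
      rw [interior_Icc] at hx
      have hdv : DifferentiableAt ℝ v x :=
        (hdiff x hx).differentiableAt (Ioo_mem_nhds hx.1 hx.2)
      have h : HasDerivAt (fun t => a_max * t - v t) (a_max * 1 - deriv v x) x :=
        ((hasDerivAt_id x).const_mul a_max).sub hdv.hasDerivAt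
      rw [h.deriv]
      linarith [hderiv x hx]
  have hpt : ∀ t ∈ Set.Icc (0 : ℝ) T, v t ≤ a_max * t := by
    intro t ht
    have := hmono (Set.left_mem_Icc.2 hT) ht ht.1
    simp [hv0] at this
    linarith
  set s := v_max / a_max with hs
  have hspos : 0 < s := div_pos hv ha
  have hint_v : ∀ a b : ℝ, 0 ≤ a → a ≤ b → b ≤ T → IntervalIntegrable v MeasureTheory.volume a b := by
    intro a b h0 hab hbT
    apply ContinuousOn.intervalIntegrable
    apply hcont.mono
    rw [Set.uIcc_of_le hab]
    exact Set.Icc_subset_Icc h0 hbT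
  -- T ≥ s
  have hTs : s ≤ T := by
    by_contra h
    push_neg at h
    have h1 : ∫ t in (0:ℝ)..T, v t ≤ ∫ t in (0:ℝ)..T, a_max * t := by
      apply intervalIntegral.integral_mono_on hT (hint_v 0 T le_rfl hT le_rfl)
        ((continuous_const.mul continuous_id).intervalIntegrable 0 T)
      exact hpt
    have h2 : ∫ t in (0:ℝ)..T, a_max * t = a_max * T ^ 2 / 2 := by
      rw [intervalIntegral.integral_const_mul, integral_id]
      ring
    have h3 : a_max * T ^ 2 / 2 < a_max * s ^ 2 / 2 := by
      have : T ^ 2 < s ^ 2 := by nlinarith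
      nlinarith
    have h4 : a_max * s ^ 2 / 2 = v_max ^ 2 / (2 * a_max) := by
      field_simp [hs]
      rw [hs]; field_simp
    rw [hint] at h1
    linarith
  -- split the integral
  have hsplit : (∫ t in (0:ℝ)..s, v t) + ∫ t in s..T, v t = L := by
    rw [intervalIntegral.integral_add_adjacent_intervals
      (hint_v 0 s le_rfl hspos.le hTs) (hint_v s T hspos.le hTs le_rfl), hint]
  have hI1 : ∫ t in (0:ℝ)..s, v t ≤ a_max * s ^ 2 / 2 := by
    have h1 : ∫ t in (0:ℝ)..s, v t ≤ ∫ t in (0:ℝ)..s, a_max * t := by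
      apply intervalIntegral.integral_mono_on hspos.le (hint_v 0 s le_rfl hspos.le hTs)
        ((continuous_const.mul continuous_id).intervalIntegrable 0 s)
      intro t ht
      exact hpt t ⟨ht.1, ht.2.trans hTs⟩
    have h2 : ∫ t in (0:ℝ)..s, a_max * t = a_max * s ^ 2 / 2 := by
      rw [intervalIntegral.integral_const_mul, integral_id]
      ring
    linarith
  have hI2 : ∫ t in s..T, v t ≤ v_max * (T - s) := by
    have h1 : ∫ t in s..T, v t ≤ ∫ t in s..T, v_max := by
      apply intervalIntegral.integral_mono_on hTs (hint_v s T hspos.le hTs le_rfl)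
        (intervalIntegrable_const)
      intro t ht
      exact (hbound t ⟨hspos.le.trans ht.1, ht.2⟩).2
    simpa [mul_comm] using h1
  have h4 : a_max * s ^ 2 / 2 = v_max ^ 2 / (2 * a_max) := by
    field_simp [hs]; rw [hs]; field_simp
  have hkey : L ≤ v_max * T - v_max ^ 2 / (2 * a_max) := by
    have : v_max * (T - s) = v_max * T - v_max ^ 2 / a_max := by
      field_simp [hs]; rw [hs]; field_simp
    have h5 : v_max ^ 2 / a_max = 2 * (v_max ^ 2 / (2 * a_max)) := by
      field_simp
    linarith
  rw [ge_iff_le, div_add_div _ _ (ne_of_gt hv) (by positivity), div_le_iff₀ (by positivity)]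
  have h6 : v_max ^ 2 / (2 * a_max) * (2 * a_max) = v_max ^ 2 := by
    field_simp
  nlinarith [mul_le_mul_of_nonneg_right hkey (by positivity : (0:ℝ) ≤ 2 * a_max)]
end

section
/- Let v_max > 0, a_max > 0 and L ≥ v_max² / (2·a_max), and set T* = L / v_max + v_max / (2·a_max). Define v : ℝ → ℝ by v t = min (a_max · t) v_max. Then v is continuous, v 0 = 0, 0 ≤ v t ≤ v_max for all t ∈ [0, T*], v is Lipschitz with constant a_max, and ∫ t in (0)..(T*), v t = L. Hence the lower bound T* on the traversal time of the control zone is attained. -/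
theorem traversal_time_lower_bound_attained (v_max a_max L : ℝ)
    (hv : 0 < v_max) (ha : 0 < a_max)
    (hL : L ≥ v_max ^ 2 / (2 * a_max)) :
    Continuous (fun t : ℝ => min (a_max * t) v_max) ∧
    min (a_max * 0) v_max = 0 ∧
    (∀ t ∈ Set.Icc (0 : ℝ) (L / v_max + v_max / (2 * a_max)),
      0 ≤ min (a_max * t) v_max ∧ min (a_max * t) v_max ≤ v_max) ∧
    LipschitzWith (Real.toNNReal a_max) (fun t : ℝ => min (a_max * t) v_max) ∧
    ∫ t in (0 : ℝ)..(L / v_max + v_max / (2 * a_max)), min (a_max * t) v_max = L := by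
  set T : ℝ := L / v_max + v_max / (2 * a_max) with hT
  set t1 : ℝ := v_max / a_max with ht1
  have ht1pos : 0 < t1 := div_pos hv ha
  have hLv : v_max / (2 * a_max) ≤ L / v_max := by
    rw [div_le_div_iff₀ (by positivity) hv]
    rw [ge_iff_le, div_le_iff₀ (by positivity)] at hL
    nlinarith
  have ht1T : t1 ≤ T := by
    rw [hT, ht1]
    have : v_max / a_max = v_max / (2 * a_max) + v_max / (2 * a_max) := by
      field_simp; ring
    rw [this]
    linarith
  refine ⟨?_, ?_, ?_, ?_, ?_⟩
  · exact (continuous_const.mul continuous_id).min continuous_const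
  · simp [hv.le]
  · intro t ht
    constructor
    · exact le_min (by nlinarith [ht.1]) hv.le
    · exact min_le_right _ _
  · rw [lipschitzWith_iff_dist_le_mul]
    intro x y
    simp only [Real.dist_eq]
    calc |min (a_max * x) v_max - min (a_max * y) v_max|
        ≤ max |a_max * x - a_max * y| |v_max - v_max| := abs_min_sub_min_le_max _ _ _ _
      _ = a_max * |x - y| := by
          rw [sub_self, abs_zero, max_eq_left (abs_nonneg _), ← mul_sub, abs_mul,
            abs_of_pos ha]
      _ ≤ (Real.toNNReal a_max : ℝ) * |x - y| := by
          rw [Real.coe_toNNReal _ ha.le]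
  · have hc1 : IntervalIntegrable (fun t : ℝ => min (a_max * t) v_max) MeasureTheory.volume 0 t1 :=
      (((continuous_const.mul continuous_id).min continuous_const)).intervalIntegrable _ _
    have hc2 : IntervalIntegrable (fun t : ℝ => min (a_max * t) v_max) MeasureTheory.volume t1 T :=
      (((continuous_const.mul continuous_id).min continuous_const)).intervalIntegrable _ _
    rw [← intervalIntegral.integral_add_adjacent_intervals hc1 hc2]
    have h1 : ∫ t in (0:ℝ)..t1, min (a_max * t) v_max = ∫ t in (0:ℝ)..t1, a_max * t := by
      apply intervalIntegral.integral_congr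
      intro t htm
      rw [Set.uIcc_of_le ht1pos.le] at htm
      have hle : a_max * t ≤ v_max := by
        have := htm.2
        rw [ht1, le_div_iff₀ ha] at this
        linarith [this]
      simp [min_eq_left hle]
    have h2 : ∫ t in t1..T, min (a_max * t) v_max = ∫ t in t1..T, v_max := by
      apply intervalIntegral.integral_congr
      intro t htm
      rw [Set.uIcc_of_le ht1T] at htm
      have hge : v_max ≤ a_max * t := by
        have := htm.1
        rw [ht1, div_le_iff₀ ha] at this
        linarith
      simp [min_eq_right hge]
    rw [h1, h2]
    rw [intervalIntegral.integral_const_mul, integral_id]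
    rw [intervalIntegral.integral_const]
    rw [ht1, hT]
    rw [smul_eq_mul]
    field_simp
    ring
end

section
/- Let N be a natural number and let E_u, E_b : Fin (N+1) → Fin (N+1) → Prop be two edge relations (unidirectional and bidirectional conflicts) such that E_u i j or E_b i j implies i < j. Let d : Fin (N+1) → ℕ satisfy d 0 = 0 and, for every j ≠ 0, d j = sInf {m : ℕ | (∀ i, E_u i j → d i < m) ∧ (∀ i, E_b i j → d i ≠ m)}. Then (a) for every j ≠ 0 the defining set is nonempty, so d j is well defined and attains its constraints; (b) E_u i j implies d i < d j; and (c) E_b i j implies d i ≠ d j. Consequently any two distinct vertices with equal depth are joined by neither an E_u edge nor an E_b edge, i.e., the iDFST layering is conflict-free. -/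
theorem iDFST_correctness (N : ℕ) (Eu Eb : Fin (N+1) → Fin (N+1) → Prop)
    (hlt : ∀ i j : Fin (N+1), Eu i j ∨ Eb i j → i < j)
    (d : Fin (N+1) → ℕ) (hd0 : d 0 = 0)
    (hd : ∀ j : Fin (N+1), j ≠ 0 →
      d j = sInf {m : ℕ | (∀ i : Fin (N+1), Eu i j → d i < m) ∧
                          (∀ i : Fin (N+1), Eb i j → d i ≠ m)}) :
    (∀ j : Fin (N+1), j ≠ 0 →
      {m : ℕ | (∀ i : Fin (N+1), Eu i j → d i < m) ∧
               (∀ i : Fin (N+1), Eb i j → d i ≠ m)}.Nonempty) ∧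
    (∀ i j : Fin (N+1), Eu i j → d i < d j) ∧
    (∀ i j : Fin (N+1), Eb i j → d i ≠ d j) ∧
    (∀ i j : Fin (N+1), i ≠ j → d i = d j → ¬ Eu i j ∧ ¬ Eb i j) := by
  have hne : ∀ j : Fin (N+1), j ≠ 0 →
      {m : ℕ | (∀ i : Fin (N+1), Eu i j → d i < m) ∧
               (∀ i : Fin (N+1), Eb i j → d i ≠ m)}.Nonempty := by
    intro j _
    refine ⟨(Finset.univ.sup d) + 1, ?_, ?_⟩
    · intro i _
      exact Nat.lt_succ_of_le (Finset.le_sup (Finset.mem_univ i))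
    · intro i _
      exact Nat.ne_of_lt (Nat.lt_succ_of_le (Finset.le_sup (Finset.mem_univ i)))
  have hmem : ∀ j : Fin (N+1), j ≠ 0 →
      (∀ i : Fin (N+1), Eu i j → d i < d j) ∧
      (∀ i : Fin (N+1), Eb i j → d i ≠ d j) := by
    intro j hj
    have := Nat.sInf_mem (hne j hj)
    rw [← hd j hj] at this
    exact this
  have hjne : ∀ i j : Fin (N+1), Eu i j ∨ Eb i j → j ≠ 0 := by
    intro i j h hj0
    subst hj0
    exact absurd (hlt i 0 h) (by simp [Fin.lt_def])
  refine ⟨hne, ?_, ?_, ?_⟩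
  · intro i j h
    exact (hmem j (hjne i j (Or.inl h))).1 i h
  · intro i j h
    exact (hmem j (hjne i j (Or.inr h))).2 i h
  · intro i j _ hdij
    constructor
    · intro h
      exact absurd hdij (Nat.ne_of_lt ((hmem j (hjne i j (Or.inl h))).1 i h))
    · intro h
      exact absurd hdij ((hmem j (hjne i j (Or.inr h))).2 i h)
end
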